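/- Let χ be a Dirichlet character of odd modulus k, p ≥ 1 odd, q a positive integer, and d, c coprime positive integers with c > 0 and d + c even. Then s_{5,p}(qd, qc : χ) = s_{5,p}(d, c : χ), where s_{5,p}(d,c:χ) = Σ_{n=1}^{ck} (−1)^n χ(n) ℰ_{p−1,χ}(dn/c) 𝔅_1(n/(ck)). -/

import Mathlib

open Finset

/-- Bernoulli polynomial evaluated on ℝ. -/
noncomputable def bernPoly (n : ℕ) (x : ℝ) : ℝ :=
  ((Polynomial.bernoulli n).map (algebraMap ℚ ℝ)).eval x

/-- Periodic Bernoulli function 𝔅ₙ (with 𝔅₁ vanishing at integers). -/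
noncomputable def pB (n : ℕ) (x : ℝ) : ℝ :=
  if n = 1 ∧ Int.fract x = 0 then 0 else bernPoly n (Int.fract x)

/-- Euler polynomial Eₙ (via the standard Bernoulli identity). -/
noncomputable def eulerPoly (n : ℕ) (x : ℝ) : ℝ :=
  2 ^ (n + 1) / (n + 1) * (bernPoly (n + 1) ((x + 1) / 2) - bernPoly (n + 1) (x / 2))

/-- Periodic Euler function ℰₙ, with ℰₙ(x+m) = (-1)^m ℰₙ(x). -/
noncomputable def pE (n : ℕ) (x : ℝ) : ℝ :=
  (-1 : ℝ) ^ ⌊x⌋ * eulerPoly n (Int.fract x)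

/-- Conjugate Dirichlet character χ̄. -/
noncomputable def conjChar {k : ℕ} (χ : DirichletCharacter ℂ k) : DirichletCharacter ℂ k :=
  χ.ringHomComp (starRingEnd ℂ)

/-- Generalized Bernoulli function 𝔅_{m,χ}(x) = k^{m-1} Σ_{j=0}^{k-1} χ̄(j) 𝔅_m((j+x)/k). -/
noncomputable def genB {k : ℕ} (χ : DirichletCharacter ℂ k) (m : ℕ) (x : ℝ) : ℂ :=
  (k : ℂ) ^ ((m : ℤ) - 1) *
    ∑ j ∈ Finset.range k, conjChar χ j * ((pB m ((j + x) / k) : ℝ) : ℂ)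

/-- Character Euler function ℰ_{m,χ}(x) = k^m Σ_{j=0}^{k-1} (-1)^j χ̄(j) ℰ_m((j+x)/k). -/
noncomputable def genE {k : ℕ} (χ : DirichletCharacter ℂ k) (m : ℕ) (x : ℝ) : ℂ :=
  (k : ℂ) ^ m *
    ∑ j ∈ Finset.range k, (-1 : ℂ) ^ j * conjChar χ j * ((pE m ((j + x) / k) : ℝ) : ℂ)

/-- Character Hardy–Berndt sum s_{1,p}(d,c:χ). -/
noncomputable def s1p {k : ℕ} (χ : DirichletCharacter ℂ k) (p d c : ℕ) : ℂ :=
  ∑ n ∈ Finset.Icc 1 (c * k),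
    χ n * genE χ (p - 1) ((d : ℝ) * n / c) * ((pB 1 ((n : ℝ) / ((c : ℝ) * k)) : ℝ) : ℂ)

/-- Character Hardy–Berndt sum s_{2,p}(d,c:χ). -/
noncomputable def s2p {k : ℕ} (χ : DirichletCharacter ℂ k) (p d c : ℕ) : ℂ :=
  ∑ n ∈ Finset.Icc 1 (c * k),
    (-1 : ℂ) ^ n * χ n * genB χ p ((d : ℝ) * n / c) * ((pB 1 ((n : ℝ) / ((c : ℝ) * k)) : ℝ) : ℂ)

/-- Character Hardy–Berndt sum s_{5,p}(d,c:χ). -/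
noncomputable def s5p {k : ℕ} (χ : DirichletCharacter ℂ k) (p d c : ℕ) : ℂ :=
  ∑ n ∈ Finset.Icc 1 (c * k),
    (-1 : ℂ) ^ n * χ n * genE χ (p - 1) ((d : ℝ) * n / c) * ((pB 1 ((n : ℝ) / ((c : ℝ) * k)) : ℝ) : ℂ)


lemma bernPoly_one (x : ℝ) : bernPoly 1 x = x - 1/2 := by
  simp [bernPoly, Polynomial.bernoulli_def, Finset.sum_range_succ, bernoulli_zero, bernoulli_one]
  ring

lemma pE_add_nat (n : ℕ) (x : ℝ) (j : ℕ) : pE n (x + j) = (-1) ^ j * pE n x := by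
  unfold pE
  rw [Int.fract_add_natCast, Int.floor_add_natCast, zpow_add₀ (by norm_num : (-1:ℝ) ≠ 0),
    zpow_natCast]
  ring

lemma pB_one_add_one (x : ℝ) : pB 1 (x + 1) = pB 1 x := by
  unfold pB
  rw [show (1:ℝ) = ((1:ℕ):ℝ) by norm_num, Int.fract_add_natCast]

lemma pB_one_fract (x : ℝ) : pB 1 (Int.fract x) = pB 1 x := by
  unfold pB
  rw [Int.fract_fract]

lemma sum_range_cast (n : ℕ) : ∑ i ∈ range n, (i:ℝ) = n * (n-1) / 2 := by
  induction n with
  | zero => simp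
  | succ m ih => rw [Finset.sum_range_succ, ih]; push_cast; ring

lemma sum_pB1_aux (q : ℕ) (hq : 0 < q) (t : ℝ) (ht0 : 0 ≤ t) (ht1 : t < 1) :
    ∑ r ∈ range q, pB 1 ((t + r) / q) = pB 1 t := by
  have hfr : ∀ r ∈ range q, Int.fract ((t + r) / q) = (t + r) / q := by
    intro r hr
    rw [Int.fract_eq_self]
    constructor
    · positivity
    · rw [div_lt_one (by positivity)]
      have hrq := Finset.mem_range.mp hr
      have h1 : (r:ℝ) + 1 ≤ q := by exact_mod_cast hrq
      linarith
  by_cases h0 : t = 0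
  · subst h0
    have hterm : ∀ r ∈ range q, pB 1 (((0:ℝ) + r) / q) =
        if r = 0 then 0 else (r:ℝ)/q - 1/2 := by
      intro r hr
      unfold pB
      rw [hfr r hr]
      by_cases hr0 : r = 0
      · subst hr0; simp
      · have hne : ((0:ℝ) + r) / q ≠ 0 := by
          have : (0:ℝ) < r := by exact_mod_cast Nat.pos_of_ne_zero hr0
          positivity
        rw [if_neg (fun h => hne h.2), if_neg hr0, bernPoly_one]
        ring
    rw [Finset.sum_congr rfl hterm]
    have hq1 : q = (q - 1) + 1 := by omega
    rw [hq1, Finset.sum_range_succ']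
    simp only [if_neg (Nat.succ_ne_zero _), if_pos rfl]
    push_cast
    rw [add_zero]
    have hpB0 : pB 1 (0:ℝ) = 0 := by unfold pB; rw [if_pos ⟨rfl, by simp⟩]
    rw [hpB0]
    rw [Finset.sum_sub_distrib, ← Finset.sum_div, Finset.sum_add_distrib, sum_range_cast,
      Finset.sum_const, Finset.card_range, nsmul_eq_mul, Finset.sum_const, Finset.card_range,
      nsmul_eq_mul]
    have hq2 : ((q-1:ℕ):ℝ) + 1 ≠ 0 := by positivity
    rw [Nat.cast_sub (by omega : 1 ≤ q)] at hq2 ⊢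
    field_simp
    ring
  · have hterm : ∀ r ∈ range q, pB 1 ((t + r) / q) = (t + r)/q - 1/2 := by
      intro r hr
      unfold pB
      rw [hfr r hr]
      have hne : (t + r) / q ≠ 0 := by
        have htpos : 0 < t := lt_of_le_of_ne ht0 (Ne.symm h0)
        positivity
      rw [if_neg (fun h => hne h.2), bernPoly_one]
    rw [Finset.sum_congr rfl hterm]
    unfold pB
    rw [if_neg (by simp [Int.fract_eq_self.mpr ⟨ht0, ht1⟩, h0]), bernPoly_one,
      Int.fract_eq_self.mpr ⟨ht0, ht1⟩]
    simp only [Finset.sum_sub_distrib, Finset.sum_const, Finset.card_range, nsmul_eq_mul,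
      Finset.sum_add_distrib, sum_range_cast, ← Finset.sum_div]
    have hqR : (q:ℝ) ≠ 0 := by positivity
    field_simp
    ring

lemma sum_pB1 (q : ℕ) (hq : 0 < q) (x : ℝ) :
    ∑ r ∈ range q, pB 1 ((x + r) / q) = pB 1 x := by
  set g : ℝ → ℝ := fun y => ∑ r ∈ range q, pB 1 ((y + r) / q) with hg
  have hper : Function.Periodic g 1 := by
    intro y
    show ∑ r ∈ range q, pB 1 ((y + 1 + r) / q) = ∑ r ∈ range q, pB 1 ((y + r) / q)
    have h1 : ∀ r : ℕ, (y + 1 + r) / q = (y + (r+1:ℕ)) / q := by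
      intro r; push_cast; ring
    simp_rw [h1]
    have h2 := Finset.sum_range_succ' (fun r : ℕ => pB 1 ((y + r) / q)) q
    have h3 := Finset.sum_range_succ (fun r : ℕ => pB 1 ((y + r) / q)) q
    have h4 : pB 1 ((y + (q:ℝ)) / q) = pB 1 ((y + (0:ℕ)) / q) := by
      have : (y + (q:ℝ)) / q = (y + (0:ℕ)) / q + 1 := by
        push_cast
        field_simp
        ring
      rw [this, pB_one_add_one]
    calc ∑ r ∈ range q, pB 1 ((y + (r+1:ℕ)) / q)
        = ∑ r ∈ range (q+1), pB 1 ((y + r) / q) - pB 1 ((y + (0:ℕ)) / q) := by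
          rw [h2]; ring
      _ = ∑ r ∈ range q, pB 1 ((y + r) / q) := by rw [h3, h4]; ring
  have hred : g x = g (Int.fract x) := by
    have h := hper.sub_int_mul_eq (x := x) (n := ⌊x⌋)
    rw [show x - (⌊x⌋:ℝ) * 1 = Int.fract x by rw [mul_one]; rfl] at h
    exact h.symm
  rw [show (∑ r ∈ range q, pB 1 ((x + r) / q)) = g x from rfl, hred, ← pB_one_fract x]
  exact sum_pB1_aux q hq _ (Int.fract_nonneg x) (Int.fract_lt_one x)

lemma genE_add_nat_mul {k : ℕ} (hk : k ≠ 0) (χ : DirichletCharacter ℂ k) (n : ℕ) (x : ℝ)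
    (j : ℕ) : genE χ n (x + j * k) = (-1 : ℂ) ^ j * genE χ n x := by
  unfold genE
  rw [Finset.mul_sum, Finset.mul_sum, Finset.mul_sum]
  refine Finset.sum_congr rfl fun i _ => ?_
  have hkR : (k:ℝ) ≠ 0 := Nat.cast_ne_zero.mpr hk
  have harg : ((i:ℝ) + (x + j * k)) / k = ((i:ℝ) + x) / k + j := by
    field_simp
    ring
  rw [harg, pE_add_nat]
  push_cast
  ring

lemma reindex (N q : ℕ) (hN : 0 < N) (f : ℕ → ℂ) :
    ∑ n ∈ Finset.Icc 1 (q * N), f n =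
      ∑ r ∈ range q, ∑ m ∈ Finset.Icc 1 N, f (m + r * N) := by
  rw [← Finset.sum_product']
  refine Finset.sum_nbij' (i := fun n => ((n - 1) / N, (n - 1) % N + 1))
    (j := fun p => p.2 + p.1 * N) ?_ ?_ ?_ ?_ ?_
  · intro n hn
    obtain ⟨hn1, hn2⟩ := Finset.mem_Icc.mp hn
    show ((n - 1) / N, (n - 1) % N + 1) ∈ range q ×ˢ Finset.Icc 1 N
    rw [Finset.mem_product, Finset.mem_range, Finset.mem_Icc]
    refine ⟨?_, by omega, ?_⟩
    · rw [Nat.div_lt_iff_lt_mul hN]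
      exact lt_of_lt_of_le (by omega) hn2
    · have := Nat.mod_lt (n - 1) hN
      omega
  · intro p hp
    rw [Finset.mem_product, Finset.mem_range, Finset.mem_Icc] at hp
    obtain ⟨hp1, hp2, hp3⟩ := hp
    show p.2 + p.1 * N ∈ Finset.Icc 1 (q * N)
    rw [Finset.mem_Icc]
    refine ⟨le_trans hp2 (Nat.le_add_right _ _), ?_⟩
    calc p.2 + p.1 * N ≤ N + p.1 * N := by omega
      _ = (p.1 + 1) * N := by ring
      _ ≤ q * N := Nat.mul_le_mul_right N (by omega)
  · intro n hn
    obtain ⟨hn1, hn2⟩ := Finset.mem_Icc.mp hn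
    show (n - 1) % N + 1 + (n - 1) / N * N = n
    have h := Nat.mod_add_div' (n - 1) N
    set A := (n - 1) % N
    set B := (n - 1) / N * N
    omega
  · intro p hp
    rw [Finset.mem_product, Finset.mem_range, Finset.mem_Icc] at hp
    obtain ⟨hp1, hp2, hp3⟩ := hp
    have he : p.2 + p.1 * N - 1 = (p.2 - 1) + p.1 * N := by omega
    have hlt : p.2 - 1 < N := by omega
    have hdiv : (p.2 + p.1 * N - 1) / N = p.1 := by
      rw [he, Nat.add_mul_div_right _ _ hN, Nat.div_eq_of_lt hlt, zero_add]
    have hmod : (p.2 + p.1 * N - 1) % N = p.2 - 1 := by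
      rw [he, Nat.add_mul_mod_self_right, Nat.mod_eq_of_lt hlt]
    show ((p.2 + p.1 * N - 1) / N, (p.2 + p.1 * N - 1) % N + 1) = p
    rw [hdiv, hmod, show p.2 - 1 + 1 = p.2 from by omega]
  · intro n hn
    obtain ⟨hn1, hn2⟩ := Finset.mem_Icc.mp hn
    show f n = f ((n - 1) % N + 1 + (n - 1) / N * N)
    congr 1
    have h := Nat.mod_add_div' (n - 1) N
    set A := (n - 1) % N
    set B := (n - 1) / N * N
    omega

theorem stmt13 (k : ℕ) (hk : Odd k) (χ : DirichletCharacter ℂ k)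
    (p : ℕ) (hp : Odd p) (hp1 : 1 ≤ p) (q : ℕ) (hq : 0 < q)
    (d c : ℕ) (hd : 0 < d) (hc : 0 < c) (hcop : Nat.Coprime d c) (hdceven : Even (d + c)) :
    s5p χ p (q * d) (q * c) = s5p χ p d c := by
  have hk0 : k ≠ 0 := by rintro rfl; simp [Nat.odd_iff] at hk
  have hNpos : 0 < c * k := Nat.mul_pos hc (Nat.pos_of_ne_zero hk0)
  have hcR : (c:ℝ) ≠ 0 := Nat.cast_ne_zero.mpr hc.ne'
  have hqR : (q:ℝ) ≠ 0 := Nat.cast_ne_zero.mpr hq.ne'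
  have hkR : (k:ℝ) ≠ 0 := Nat.cast_ne_zero.mpr hk0
  unfold s5p
  rw [show q * c * k = q * (c * k) from mul_assoc q c k, reindex (c * k) q hNpos,
    Finset.sum_comm]
  refine Finset.sum_congr rfl fun m hm => ?_
  have key : ∀ r ∈ range q, (-1:ℂ) ^ (m + r * (c * k)) * χ ↑(m + r * (c * k)) *
      genE χ (p - 1) ((↑(q * d) : ℝ) * ↑(m + r * (c * k)) / ↑(q * c)) *
      ((pB 1 ((↑(m + r * (c * k)) : ℝ) / ((↑(q * c) : ℝ) * ↑k)) : ℝ) : ℂ)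
      = (-1:ℂ) ^ m * χ ↑m * genE χ (p - 1) ((d : ℝ) * m / c) *
        ((pB 1 (((m : ℝ) / ((c : ℝ) * k) + r) / q) : ℝ) : ℂ) := by
    intro r hr
    have hχ : χ ↑(m + r * (c * k)) = χ ↑m := by
      congr 1
      push_cast
      simp [ZMod.natCast_self]
    have harg1 : (↑(q * d) : ℝ) * ↑(m + r * (c * k)) / ↑(q * c)
        = (d : ℝ) * m / c + (↑(r * d) : ℝ) * ↑k := by
      push_cast
      field_simp
    have harg2 : (↑(m + r * (c * k)) : ℝ) / ((↑(q * c) : ℝ) * ↑k)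
        = ((m : ℝ) / ((c : ℝ) * k) + r) / q := by
      push_cast
      rw [div_add' _ _ _ (by positivity : (c:ℝ) * k ≠ 0), div_div]
      rw [div_eq_div_iff (by positivity) (by positivity)]
      ring
    rw [hχ, harg1, genE_add_nat_mul hk0, harg2, pow_add]
    have hsign : (-1:ℂ) ^ (r * (c * k)) * (-1:ℂ) ^ (r * d) = 1 := by
      rw [← pow_add, show r * (c * k) + r * d = r * (c * k + d) from by ring]
      refine Even.neg_one_pow (Even.mul_left ?_ r)
      have hkne : ¬ Even k := Nat.not_even_iff_odd.mpr hk
      rw [Nat.even_add] at hdceven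
      rw [Nat.even_add, Nat.even_mul]
      tauto
    calc (-1:ℂ) ^ m * (-1:ℂ) ^ (r * (c * k)) * χ ↑m *
          ((-1:ℂ) ^ (r * d) * genE χ (p - 1) ((d : ℝ) * m / c)) *
          ((pB 1 (((m : ℝ) / ((c : ℝ) * k) + r) / q) : ℝ) : ℂ)
        = ((-1:ℂ) ^ (r * (c * k)) * (-1:ℂ) ^ (r * d)) *
          ((-1:ℂ) ^ m * χ ↑m * genE χ (p - 1) ((d : ℝ) * m / c) *
            ((pB 1 (((m : ℝ) / ((c : ℝ) * k) + r) / q) : ℝ) : ℂ)) := by ring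
      _ = (-1:ℂ) ^ m * χ ↑m * genE χ (p - 1) ((d : ℝ) * m / c) *
            ((pB 1 (((m : ℝ) / ((c : ℝ) * k) + r) / q) : ℝ) : ℂ) := by
          rw [hsign, one_mul]
  rw [Finset.sum_congr rfl key, ← Finset.mul_sum, ← Complex.ofReal_sum,
    sum_pB1 q hq ((m : ℝ) / ((c : ℝ) * k))]
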